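/- arXiv:2501.11832 — 3 statements merged into one kernel-verified Lean document; each statement's English description precedes it below -/
import Mathlib

section
/- Let G be a finite simple graph, let P_1 be a path and C_1 a cycle in G that are vertex-disjoint, and let C_f be a 4-cycle in G on vertices a, b, c, d (with edges ab, bc, cd, da) such that the edge ab belongs to P_1, the edge cd belongs to C_1, and the edges bc and ad belong to neither. Then the subgraph obtained from P_1 ∪ C_1 by removing the edges ab and cd and adding the edges bc and ad is a single path whose vertex set is V(P_1) ∪ V(C_1), and whose endpoints are the endpoints of P_1. -/
/-- A subgraph is a cycle if it is nonempty, connected and every one of its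
vertices has exactly two neighbours within it. -/
def SimpleGraph.Subgraph.IsCycleSubgraph {V : Type*} {G : SimpleGraph V}
    (C : G.Subgraph) : Prop :=
  C.Connected ∧ ∀ v ∈ C.verts, (C.neighborSet v).ncard = 2

/-- A subgraph is a path with endpoints `x` and `y` if it is connected, `x ≠ y`
are vertices of degree one in it, and every other vertex has degree two. -/
def SimpleGraph.Subgraph.IsPathSubgraph {V : Type*} {G : SimpleGraph V}
    (P : G.Subgraph) (x y : V) : Prop :=
  P.Connected ∧ x ≠ y ∧ x ∈ P.verts ∧ y ∈ P.verts ∧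
    (P.neighborSet x).ncard = 1 ∧ (P.neighborSet y).ncard = 1 ∧
    ∀ v ∈ P.verts, v ≠ x → v ≠ y → (P.neighborSet v).ncard = 2


open SimpleGraph

namespace CPMaux

variable {V : Type*} {G : SimpleGraph V}

lemma rt_reachable {H : G.Subgraph} {u v : V}
    (h : Relation.ReflTransGen H.Adj u v) (hu : u ∈ H.verts) :
    ∀ (hv : v ∈ H.verts), H.coe.Reachable ⟨u, hu⟩ ⟨v, hv⟩ := by
  induction h with
  | refl => intro hv; exact Reachable.refl _
  | tail _ hadj ih =>
    intro hv
    exact (ih (H.edge_vert hadj)).trans hadj.coe.reachable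

lemma rt_of_reachable {H : G.Subgraph} {u v : H.verts}
    (h : H.coe.Reachable u v) : Relation.ReflTransGen H.Adj u.val v.val := by
  rw [reachable_iff_reflTransGen] at h
  exact h.lift Subtype.val (fun _ _ hh => hh)

lemma escape {K : G.Subgraph} {p q : V} (hpq : K.Adj p q) {w : V}
    (h : Relation.ReflTransGen K.Adj w p) :
    Relation.ReflTransGen (K.deleteEdges {s(p, q)}).Adj w p ∨
      Relation.ReflTransGen (K.deleteEdges {s(p, q)}).Adj w q := by
  induction h using Relation.ReflTransGen.head_induction_on with
  | refl => exact Or.inl Relation.ReflTransGen.refl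
  | head step _ ih =>
    rename_i w w' _
    by_cases hs : s(w, w') = s(p, q)
    · rw [Sym2.eq_iff] at hs
      rcases hs with ⟨h1, _⟩ | ⟨h1, _⟩
      · exact Or.inl (h1 ▸ Relation.ReflTransGen.refl)
      · exact Or.inr (h1 ▸ Relation.ReflTransGen.refl)
    · have hD : (K.deleteEdges {s(p, q)}).Adj w w' := by
        rw [SimpleGraph.Subgraph.deleteEdges_adj]
        exact ⟨step, by simpa using hs⟩
      rcases ih with h' | h'
      · exact Or.inl (Relation.ReflTransGen.head hD h')
      · exact Or.inr (Relation.ReflTransGen.head hD h')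

lemma cycle_no_bridge [Fintype V] {C : G.Subgraph}
    (hconn : C.Connected) (hdeg : ∀ v ∈ C.verts, (C.neighborSet v).ncard = 2)
    {p q : V} (hpq : C.Adj p q) :
    Relation.ReflTransGen (C.deleteEdges {s(p, q)}).Adj p q := by
  classical
  by_contra hnot
  set D := C.deleteEdges {s(p, q)} with hD
  set Rc : V → Prop := fun v => Relation.ReflTransGen D.Adj p v with hRc
  have hpq' : p ≠ q := (C.adj_sub hpq).ne
  have hclosed : ∀ {u v : V}, Rc u → D.Adj u v → Rc v := fun hu h => hu.tail h
  -- neighbor sets in D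
  have hDadj : ∀ u v, D.Adj u v ↔ C.Adj u v ∧ s(u, v) ≠ s(p, q) := by
    intro u v
    rw [hD, SimpleGraph.Subgraph.deleteEdges_adj]
    simp
  have hnbP : D.neighborSet p = C.neighborSet p \ {q} := by
    ext u
    simp only [SimpleGraph.Subgraph.mem_neighborSet, hDadj, ne_eq, Sym2.eq_iff,
      Set.mem_diff, Set.mem_singleton_iff, not_or]
    tauto
  have hnbOther : ∀ u, u ≠ p → u ≠ q → D.neighborSet u = C.neighborSet u := by
    intro u hup huq
    ext w
    simp only [SimpleGraph.Subgraph.mem_neighborSet, hDadj, ne_eq, Sym2.eq_iff, not_or]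
    tauto
  -- the component graph
  let G2 : SimpleGraph V :=
    { Adj := fun u v => D.Adj u v ∧ Rc u ∧ Rc v
      symm := ⟨fun u v ⟨h, hu, hv⟩ => ⟨h.symm, hv, hu⟩⟩
      loopless := ⟨fun v ⟨h, _, _⟩ => (D.adj_sub h).ne rfl⟩ }
  have hG2nb : ∀ v, Rc v → G2.neighborSet v = D.neighborSet v := by
    intro v hv
    ext u
    simp only [SimpleGraph.mem_neighborSet]
    exact ⟨fun h => h.1, fun h => ⟨h, hv, hclosed hv h⟩⟩
  have hG2nb' : ∀ v, ¬ Rc v → G2.neighborSet v = ∅ := by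
    intro v hv
    ext u
    simp only [SimpleGraph.mem_neighborSet, Set.mem_empty_iff_false, iff_false]
    exact fun h => hv h.2.1
  have hdegree : ∀ v, G2.degree v = (G2.neighborSet v).ncard := by
    intro v
    rw [← SimpleGraph.card_neighborSet_eq_degree, Set.ncard_eq_toFinset_card',
      Set.toFinset_card]
  have hRq : ¬ Rc q := hnot
  have hRp : Rc p := Relation.ReflTransGen.refl
  have hmemC : ∀ v, Rc v → v ≠ p → v ∈ C.verts := by
    intro v hv hvp
    rcases hv.cases_tail with h | ⟨u, _, hu⟩
    · exact absurd h hvp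
    · have : v ∈ D.verts := D.edge_vert hu.symm
      rwa [hD, SimpleGraph.Subgraph.deleteEdges_verts] at this
  -- degree computation
  have hdeg1 : G2.degree p = 1 := by
    rw [hdegree, hG2nb p hRp, hnbP]
    have hqmem : q ∈ C.neighborSet p := hpq
    have h2 : (C.neighborSet p).ncard = 2 := hdeg p (C.edge_vert hpq)
    have := Set.ncard_diff_singleton_add_one hqmem (Set.toFinite _)
    omega
  have hdeg2 : ∀ v, Rc v → v ≠ p → G2.degree v = 2 := by
    intro v hv hvp
    have hvq : v ≠ q := fun h => hRq (h ▸ hv)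
    rw [hdegree, hG2nb v hv, hnbOther v hvp hvq]
    exact hdeg v (hmemC v hv hvp)
  have hdeg0 : ∀ v, ¬ Rc v → G2.degree v = 0 := by
    intro v hv
    rw [hdegree, hG2nb' v hv, Set.ncard_empty]
  -- sum of degrees
  have hsum := SimpleGraph.sum_degrees_eq_twice_card_edges G2
  set T : Finset V := Finset.univ.filter Rc with hT
  have hpT : p ∈ T := by simp [hT, hRp]
  have hsplit : ∑ v, G2.degree v = ∑ v ∈ T, G2.degree v := by
    refine (Finset.sum_subset (Finset.subset_univ T) ?_).symm
    intro v _ hv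
    refine hdeg0 v fun h => hv ?_
    simp [hT, h]
  have h2' : ∀ v ∈ T.erase p, G2.degree v = 2 := by
    intro v hv
    simp only [Finset.mem_erase, hT, Finset.mem_filter] at hv
    exact hdeg2 v hv.2.2 hv.1
  have hTsum : ∑ v ∈ T, G2.degree v = 1 + 2 * (T.card - 1) := by
    rw [← Finset.add_sum_erase T _ hpT, hdeg1, Finset.sum_congr rfl h2',
      Finset.sum_const, smul_eq_mul, Finset.card_erase_of_mem hpT, mul_comm]
  have hcard : 1 ≤ T.card := Finset.card_pos.mpr ⟨p, hpT⟩
  rw [hsplit, hTsum] at hsum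
  omega

end CPMaux

open CPMaux in
/-- **Cycle-path-merging operation.**  Let `P₁` be a path with endpoints
`x, y` and `C₁` a cycle in a finite simple graph `G`, vertex-disjoint from
`P₁`, and let `a, b, c, d` be the vertices of a 4-cycle `C_f` of `G` (with
edges `ab, bc, cd, da`) such that `ab` belongs to `P₁`, `cd` belongs to `C₁`,
and the edges `bc` and `ad` belong to neither.  Then the subgraph obtained from
`P₁ ∪ C₁` by removing the edges `ab`, `cd` and adding the edges `bc`, `ad` is a
single path on vertex set `V(P₁) ∪ V(C₁)` whose endpoints are `x` and `y`. -/
theorem cycle_path_merging {V : Type*} [Fintype V] {G : SimpleGraph V}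
    (P₁ C₁ : G.Subgraph) (x y : V)
    (hP₁ : P₁.IsPathSubgraph x y) (hC₁ : C₁.IsCycleSubgraph)
    (hdisj : Disjoint P₁.verts C₁.verts)
    (a b c d : V)
    (hab : G.Adj a b) (hbc : G.Adj b c) (hcd : G.Adj c d) (hda : G.Adj d a)
    (hac : a ≠ c) (hbd : b ≠ d)
    (habP₁ : P₁.Adj a b) (hcdC₁ : C₁.Adj c d)
    (hbcP : ¬ P₁.Adj b c) (hbcC : ¬ C₁.Adj b c)
    (hadP : ¬ P₁.Adj a d) (hadC : ¬ C₁.Adj a d) :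
    (((P₁ ⊔ C₁).deleteEdges {s(a, b), s(c, d)} ⊔ G.subgraphOfAdj hbc ⊔
        G.subgraphOfAdj hda).verts = P₁.verts ∪ C₁.verts) ∧
      ((P₁ ⊔ C₁).deleteEdges {s(a, b), s(c, d)} ⊔ G.subgraphOfAdj hbc ⊔
        G.subgraphOfAdj hda).IsPathSubgraph x y := by
  classical
  set H := (P₁ ⊔ C₁).deleteEdges {s(a, b), s(c, d)} ⊔ G.subgraphOfAdj hbc ⊔
      G.subgraphOfAdj hda with hHdef
  -- basic membership facts
  have haP : a ∈ P₁.verts := P₁.edge_vert habP₁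
  have hbP : b ∈ P₁.verts := P₁.edge_vert habP₁.symm
  have hcC : c ∈ C₁.verts := C₁.edge_vert hcdC₁
  have hdC : d ∈ C₁.verts := C₁.edge_vert hcdC₁.symm
  have haC : a ∉ C₁.verts := fun h => Set.disjoint_left.mp hdisj haP h
  have hbC : b ∉ C₁.verts := fun h => Set.disjoint_left.mp hdisj hbP h
  have hcP : c ∉ P₁.verts := fun h => Set.disjoint_left.mp hdisj h hcC
  have hdP : d ∉ P₁.verts := fun h => Set.disjoint_left.mp hdisj h hdC
  have hne_ab : a ≠ b := hab.ne
  have hne_cd : c ≠ d := hcd.ne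
  have hne_ad : a ≠ d := fun h => hdP (h ▸ haP)
  have hne_bc : b ≠ c := fun h => hcP (h ▸ hbP)
  -- adjacency characterization
  have hPnotCD : ∀ {u v : V}, P₁.Adj u v → s(u, v) ≠ s(c, d) := by
    intro u v h hs
    rw [Sym2.eq_iff] at hs
    rcases hs with ⟨h1, _⟩ | ⟨h1, _⟩
    · exact hcP (h1 ▸ P₁.edge_vert h)
    · exact hdP (h1 ▸ P₁.edge_vert h)
  have hCnotAB : ∀ {u v : V}, C₁.Adj u v → s(u, v) ≠ s(a, b) := by
    intro u v h hs
    rw [Sym2.eq_iff] at hs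
    rcases hs with ⟨h1, _⟩ | ⟨h1, _⟩
    · exact haC (h1 ▸ C₁.edge_vert h)
    · exact hbC (h1 ▸ C₁.edge_vert h)
  have hHadj : ∀ u v, H.Adj u v ↔
      (P₁.Adj u v ∧ s(u, v) ≠ s(a, b)) ∨ (C₁.Adj u v ∧ s(u, v) ≠ s(c, d)) ∨
        s(u, v) = s(b, c) ∨ s(u, v) = s(d, a) := by
    intro u v
    rw [hHdef]
    simp only [Subgraph.sup_adj, Subgraph.deleteEdges_adj, subgraphOfAdj_adj,
      Set.mem_insert_iff, Set.mem_singleton_iff, not_or]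
    constructor
    · rintro ((⟨hP | hC, h1, h2⟩ | h) | h)
      · exact Or.inl ⟨hP, h1⟩
      · exact Or.inr (Or.inl ⟨hC, h2⟩)
      · exact Or.inr (Or.inr (Or.inl h.symm))
      · exact Or.inr (Or.inr (Or.inr h.symm))
    · rintro (⟨hP, h1⟩ | ⟨hC, h2⟩ | h | h)
      · exact Or.inl (Or.inl ⟨Or.inl hP, h1, hPnotCD hP⟩)
      · exact Or.inl (Or.inl ⟨Or.inr hC, hCnotAB hC, h2⟩)
      · exact Or.inl (Or.inr h.symm)
      · exact Or.inr h.symm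
  -- verts
  have hverts : H.verts = P₁.verts ∪ C₁.verts := by
    rw [hHdef]
    simp only [Subgraph.verts_sup, Subgraph.deleteEdges_verts, subgraphOfAdj_verts]
    ext v
    simp only [Set.mem_union, Set.mem_insert_iff, Set.mem_singleton_iff]
    constructor
    · rintro (((h | h) | (h | h)) | (h | h)) <;>
        first
          | exact Or.inl h
          | exact Or.inr h
          | exact Or.inl (h ▸ hbP)
          | exact Or.inr (h ▸ hcC)
          | exact Or.inr (h ▸ hdC)
          | exact Or.inl (h ▸ haP)
    · rintro (h | h)
      · exact Or.inl (Or.inl (Or.inl h))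
      · exact Or.inl (Or.inl (Or.inr h))
  -- neighbor sets
  have hnbA : H.neighborSet a = insert d (P₁.neighborSet a \ {b}) := by
    ext u
    rw [Subgraph.mem_neighborSet, hHadj]
    simp only [Set.mem_insert_iff, Set.mem_diff, Set.mem_singleton_iff,
      Subgraph.mem_neighborSet]
    constructor
    · rintro (⟨hP, hne⟩ | ⟨hC, _⟩ | h | h)
      · exact Or.inr ⟨hP, fun h => hne (by rw [h])⟩
      · exact absurd (C₁.edge_vert hC) haC
      · rw [Sym2.eq_iff] at h
        rcases h with ⟨h1, _⟩ | ⟨h1, _⟩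
        · exact absurd h1 hne_ab
        · exact absurd h1 hac
      · rw [Sym2.eq_iff] at h
        rcases h with ⟨h1, _⟩ | ⟨_, h2⟩
        · exact absurd h1 hne_ad
        · exact Or.inl h2
    · rintro (rfl | ⟨hP, hne⟩)
      · exact Or.inr (Or.inr (Or.inr Sym2.eq_swap))
      · refine Or.inl ⟨hP, fun hs => ?_⟩
        rw [Sym2.eq_iff] at hs
        rcases hs with ⟨_, h2⟩ | ⟨h1, _⟩
        · exact hne h2
        · exact hne_ab h1
  have hnbB : H.neighborSet b = insert c (P₁.neighborSet b \ {a}) := by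
    ext u
    rw [Subgraph.mem_neighborSet, hHadj]
    simp only [Set.mem_insert_iff, Set.mem_diff, Set.mem_singleton_iff,
      Subgraph.mem_neighborSet]
    constructor
    · rintro (⟨hP, hne⟩ | ⟨hC, _⟩ | h | h)
      · exact Or.inr ⟨hP, fun h => hne (by subst h; exact Sym2.eq_swap)⟩
      · exact absurd (C₁.edge_vert hC) hbC
      · rw [Sym2.eq_iff] at h
        rcases h with ⟨_, h2⟩ | ⟨h1, _⟩
        · exact Or.inl h2
        · exact absurd h1 hne_bc
      · rw [Sym2.eq_iff] at h
        rcases h with ⟨h1, _⟩ | ⟨h1, _⟩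
        · exact absurd h1 hbd
        · exact absurd h1.symm hne_ab
    · rintro (rfl | ⟨hP, hne⟩)
      · exact Or.inr (Or.inr (Or.inl rfl))
      · refine Or.inl ⟨hP, fun hs => ?_⟩
        rw [Sym2.eq_iff] at hs
        rcases hs with ⟨h1, _⟩ | ⟨_, h2⟩
        · exact hne_ab h1.symm
        · exact hne h2
  have hnbC : H.neighborSet c = insert b (C₁.neighborSet c \ {d}) := by
    ext u
    rw [Subgraph.mem_neighborSet, hHadj]
    simp only [Set.mem_insert_iff, Set.mem_diff, Set.mem_singleton_iff,
      Subgraph.mem_neighborSet]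
    constructor
    · rintro (⟨hP, _⟩ | ⟨hC, hne⟩ | h | h)
      · exact absurd (P₁.edge_vert hP) hcP
      · exact Or.inr ⟨hC, fun h => hne (by rw [h])⟩
      · rw [Sym2.eq_iff] at h
        rcases h with ⟨h1, _⟩ | ⟨_, h2⟩
        · exact absurd h1.symm hne_bc
        · exact Or.inl h2
      · rw [Sym2.eq_iff] at h
        rcases h with ⟨h1, _⟩ | ⟨h1, _⟩
        · exact absurd h1 hne_cd
        · exact absurd h1.symm hac
    · rintro (rfl | ⟨hC, hne⟩)
      · exact Or.inr (Or.inr (Or.inl Sym2.eq_swap))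
      · refine Or.inr (Or.inl ⟨hC, fun hs => ?_⟩)
        rw [Sym2.eq_iff] at hs
        rcases hs with ⟨_, h2⟩ | ⟨h1, _⟩
        · exact hne h2
        · exact hne_cd h1
  have hnbD : H.neighborSet d = insert a (C₁.neighborSet d \ {c}) := by
    ext u
    rw [Subgraph.mem_neighborSet, hHadj]
    simp only [Set.mem_insert_iff, Set.mem_diff, Set.mem_singleton_iff,
      Subgraph.mem_neighborSet]
    constructor
    · rintro (⟨hP, _⟩ | ⟨hC, hne⟩ | h | h)
      · exact absurd (P₁.edge_vert hP) hdP
      · exact Or.inr ⟨hC, fun h => hne (by subst h; exact Sym2.eq_swap)⟩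
      · rw [Sym2.eq_iff] at h
        rcases h with ⟨h1, _⟩ | ⟨h1, _⟩
        · exact absurd h1.symm hbd
        · exact absurd h1.symm hne_cd
      · rw [Sym2.eq_iff] at h
        rcases h with ⟨_, h2⟩ | ⟨h1, _⟩
        · exact Or.inl h2
        · exact absurd h1.symm hne_ad
    · rintro (rfl | ⟨hC, hne⟩)
      · exact Or.inr (Or.inr (Or.inr rfl))
      · refine Or.inr (Or.inl ⟨hC, fun hs => ?_⟩)
        rw [Sym2.eq_iff] at hs
        rcases hs with ⟨h1, _⟩ | ⟨_, h2⟩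
        · exact hne_cd h1.symm
        · exact hne h2
  have hnbP : ∀ v ∈ P₁.verts, v ≠ a → v ≠ b → H.neighborSet v = P₁.neighborSet v := by
    intro v hv hva hvb
    have hvc : v ≠ c := fun h => hcP (h ▸ hv)
    have hvd : v ≠ d := fun h => hdP (h ▸ hv)
    ext u
    rw [Subgraph.mem_neighborSet, hHadj, Subgraph.mem_neighborSet]
    constructor
    · rintro (⟨hP, _⟩ | ⟨hC, _⟩ | h | h)
      · exact hP
      · exact absurd hv (fun hh => Set.disjoint_left.mp hdisj hh (C₁.edge_vert hC))
      · rw [Sym2.eq_iff] at h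
        rcases h with ⟨h1, _⟩ | ⟨h1, _⟩
        · exact absurd h1 hvb
        · exact absurd h1 hvc
      · rw [Sym2.eq_iff] at h
        rcases h with ⟨h1, _⟩ | ⟨h1, _⟩
        · exact absurd h1 hvd
        · exact absurd h1 hva
    · intro hP
      refine Or.inl ⟨hP, fun hs => ?_⟩
      rw [Sym2.eq_iff] at hs
      rcases hs with ⟨h1, _⟩ | ⟨h1, _⟩
      · exact hva h1
      · exact hvb h1
  have hnbQ : ∀ v ∈ C₁.verts, v ≠ c → v ≠ d → H.neighborSet v = C₁.neighborSet v := by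
    intro v hv hvc hvd
    have hva : v ≠ a := fun h => haC (h ▸ hv)
    have hvb : v ≠ b := fun h => hbC (h ▸ hv)
    ext u
    rw [Subgraph.mem_neighborSet, hHadj, Subgraph.mem_neighborSet]
    constructor
    · rintro (⟨hP, _⟩ | ⟨hC, _⟩ | h | h)
      · exact absurd hv (fun hh => Set.disjoint_right.mp hdisj hh (P₁.edge_vert hP))
      · exact hC
      · rw [Sym2.eq_iff] at h
        rcases h with ⟨h1, _⟩ | ⟨h1, _⟩
        · exact absurd h1 hvb
        · exact absurd h1 hvc
      · rw [Sym2.eq_iff] at h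
        rcases h with ⟨h1, _⟩ | ⟨h1, _⟩
        · exact absurd h1 hvd
        · exact absurd h1 hva
    · intro hC
      refine Or.inr (Or.inl ⟨hC, fun hs => ?_⟩)
      rw [Sym2.eq_iff] at hs
      rcases hs with ⟨h1, _⟩ | ⟨h1, _⟩
      · exact hvc h1
      · exact hvd h1
  -- ncard computations
  have hdegP : ∀ v ∈ P₁.verts, (H.neighborSet v).ncard = (P₁.neighborSet v).ncard := by
    intro v hv
    by_cases hva : v = a
    · subst hva
      rw [hnbA]
      have hd : d ∉ P₁.neighborSet v \ {b} := fun h => hdP (P₁.edge_vert h.1.symm)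
      have hb' : b ∈ P₁.neighborSet v := habP₁
      rw [Set.ncard_insert_of_notMem hd (Set.toFinite _)]
      have := Set.ncard_diff_singleton_add_one hb' (Set.toFinite _)
      omega
    by_cases hvb : v = b
    · subst hvb
      rw [hnbB]
      have hc' : c ∉ P₁.neighborSet v \ {a} := fun h => hcP (P₁.edge_vert h.1.symm)
      have ha' : a ∈ P₁.neighborSet v := habP₁.symm
      rw [Set.ncard_insert_of_notMem hc' (Set.toFinite _)]
      have := Set.ncard_diff_singleton_add_one ha' (Set.toFinite _)
      omega
    · rw [hnbP v hv hva hvb]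
  have hdegC : ∀ v ∈ C₁.verts, (H.neighborSet v).ncard = (C₁.neighborSet v).ncard := by
    intro v hv
    by_cases hvc : v = c
    · subst hvc
      rw [hnbC]
      have hb' : b ∉ C₁.neighborSet v \ {d} := fun h => hbC (C₁.edge_vert h.1.symm)
      have hd' : d ∈ C₁.neighborSet v := hcdC₁
      rw [Set.ncard_insert_of_notMem hb' (Set.toFinite _)]
      have := Set.ncard_diff_singleton_add_one hd' (Set.toFinite _)
      omega
    by_cases hvd : v = d
    · subst hvd
      rw [hnbD]
      have ha' : a ∉ C₁.neighborSet v \ {c} := fun h => haC (C₁.edge_vert h.1.symm)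
      have hc' : c ∈ C₁.neighborSet v := hcdC₁.symm
      rw [Set.ncard_insert_of_notMem ha' (Set.toFinite _)]
      have := Set.ncard_diff_singleton_add_one hc' (Set.toFinite _)
      omega
    · rw [hnbQ v hv hvc hvd]
  -- connectivity
  have hstepP : ∀ {u v : V}, (P₁.deleteEdges {s(a, b)}).Adj u v → H.Adj u v := by
    intro u v h
    rw [Subgraph.deleteEdges_adj] at h
    rw [hHadj]
    exact Or.inl ⟨h.1, by simpa using h.2⟩
  have hstepC : ∀ {u v : V}, (C₁.deleteEdges {s(c, d)}).Adj u v → H.Adj u v := by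
    intro u v h
    rw [Subgraph.deleteEdges_adj] at h
    rw [hHadj]
    exact Or.inr (Or.inl ⟨h.1, by simpa using h.2⟩)
  have hHsymm : Symmetric H.Adj := fun u v h => h.symm
  have hRTsymm : ∀ {u v : V}, Relation.ReflTransGen H.Adj u v → Relation.ReflTransGen H.Adj v u :=
    fun h => letI : Std.Symm H.Adj := ⟨fun _ _ h => hHsymm h⟩; Std.Symm.symm _ _ h
  have hHad : H.Adj a d := by
    rw [hHadj]
    exact Or.inr (Or.inr (Or.inr (Sym2.eq_swap)))
  have hHcb : H.Adj c b := by
    rw [hHadj]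
    exact Or.inr (Or.inr (Or.inl (Sym2.eq_swap)))
  have hreachP : ∀ w ∈ P₁.verts, Relation.ReflTransGen P₁.Adj w a := by
    intro w hw
    have := hP₁.1.preconnected ⟨w, hw⟩ ⟨a, haP⟩
    exact rt_of_reachable this
  have hreachC : ∀ w ∈ C₁.verts, Relation.ReflTransGen C₁.Adj w c := by
    intro w hw
    have := hC₁.1.preconnected ⟨w, hw⟩ ⟨c, hcC⟩
    exact rt_of_reachable this
  have hbridge : Relation.ReflTransGen (C₁.deleteEdges {s(c, d)}).Adj c d :=
    cycle_no_bridge hC₁.1 hC₁.2 hcdC₁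
  have hdc : Relation.ReflTransGen H.Adj d c :=
    hRTsymm (Relation.ReflTransGen.mono (fun _ _ h => hstepC h) _ _ hbridge)
  -- a ~ b in H
  have hab' : Relation.ReflTransGen H.Adj a b :=
    ((Relation.ReflTransGen.single hHad).trans hdc).tail hHcb
  have hall : ∀ v ∈ H.verts, Relation.ReflTransGen H.Adj v a := by
    intro v hv
    rw [hverts] at hv
    rcases hv with hv | hv
    · rcases escape habP₁ (hreachP v hv) with h | h
      · exact Relation.ReflTransGen.mono (fun _ _ hh => hstepP hh) _ _ h
      · exact (Relation.ReflTransGen.mono (fun _ _ hh => hstepP hh) _ _ h).trans (hRTsymm hab')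
    · rcases escape hcdC₁ (hreachC v hv) with h | h
      · exact ((Relation.ReflTransGen.mono (fun _ _ hh => hstepC hh) _ _ h).tail hHcb).trans (hRTsymm hab')
      · exact (Relation.ReflTransGen.mono (fun _ _ hh => hstepC hh) _ _ h).tail hHad.symm
  have hconn : H.Connected := by
    rw [Subgraph.connected_iff]
    constructor
    · refine ⟨fun u v => ?_⟩
      have hu := hall u.val u.2
      have hv := hall v.val v.2
      have : Relation.ReflTransGen H.Adj u.val v.val := hu.trans (hRTsymm hv)
      exact rt_reachable this u.2 v.2
    · exact ⟨x, hverts ▸ Or.inl hP₁.2.2.1⟩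
  -- assemble
  refine ⟨hverts, hconn, hP₁.2.1, ?_, ?_, ?_, ?_, ?_⟩
  · exact hverts ▸ Or.inl hP₁.2.2.1
  · exact hverts ▸ Or.inl hP₁.2.2.2.1
  · rw [hdegP x hP₁.2.2.1]; exact hP₁.2.2.2.2.1
  · rw [hdegP y hP₁.2.2.2.1]; exact hP₁.2.2.2.2.2.1
  · intro v hv hvx hvy
    rw [hverts] at hv
    rcases hv with hv | hv
    · rw [hdegP v hv]
      exact hP₁.2.2.2.2.2.2 v hv hvx hvy
    · rw [hdegC v hv]
      exact hC₁.2 v hv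
end

section
/- Let G be a finite simple graph and let M be a 2-limited spanning subgraph of G, i.e. V(M) = V(G) and 1 ≤ deg_M(v) ≤ 2 for every vertex v. Let P = (v_0, v_1, …, v_k) be an M-augmenting path: a path in G whose edges alternately lie outside M and inside M, whose first edge v_0v_1 and last edge v_{k−1}v_k lie outside M, and whose endpoints v_0 and v_k satisfy deg_M(v_0) = deg_M(v_k) = 1. Then M_1 = M ⊕ P (the subgraph whose edge set is the symmetric difference of the edge sets of M and P) is again a 2-limited spanning subgraph of G, and the number of vertices of degree 1 in M_1 equals the number of vertices of degree 1 in M minus 2. -/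
open SimpleGraph

variable {V : Type*}

/-- `M` is a 2-limited spanning subgraph of `G`: it contains every vertex and
every vertex has degree 1 or 2 in `M`. -/
def IsTwoLimited {G : SimpleGraph V} (M : G.Subgraph) : Prop :=
  M.IsSpanning ∧ ∀ v : V, 1 ≤ (M.neighborSet v).ncard ∧ (M.neighborSet v).ncard ≤ 2

/-- An `M`-augmenting path: a path in `G` whose edges alternately lie outside
`M` (the even-indexed ones, in particular the first and the last — so the
length is odd) and inside `M`, and whose two endpoints are unfilled, i.e. have
degree 1 in `M`. -/
def IsAugmentingPath {G : SimpleGraph V} (M : G.Subgraph) {u v : V}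
    (p : G.Walk u v) : Prop :=
  p.IsPath ∧ Odd p.length ∧
    (M.neighborSet u).ncard = 1 ∧ (M.neighborSet v).ncard = 1 ∧
    ∀ (i : ℕ) (h : i < p.edges.length),
      (p.edges.get ⟨i, h⟩ ∈ M.edgeSet ↔ i % 2 = 1)

/-- The spanning subgraph `M ⊕ P` whose edge set is the symmetric difference of
the edge sets of `M` and of the path `P`. -/
def symmDiffSubgraph {G : SimpleGraph V} (M : G.Subgraph) {u v : V}
    (p : G.Walk u v) : G.Subgraph where
  verts := Set.univ
  Adj x y := (M.Adj x y ∧ s(x, y) ∉ p.edges) ∨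
    (G.Adj x y ∧ s(x, y) ∈ p.edges ∧ ¬ M.Adj x y)
  adj_sub := by
    rintro x y (⟨h, -⟩ | ⟨h, -, -⟩)
    · exact M.adj_sub h
    · exact h
  edge_vert := by
    intro x y _
    trivial
  symm := by
    constructor
    rintro x y (⟨h1, h2⟩ | ⟨h1, h2, h3⟩)
    · exact Or.inl ⟨h1.symm, by rwa [Sym2.eq_swap]⟩
    · exact Or.inr ⟨h1.symm, by rwa [Sym2.eq_swap], fun h => h3 h.symm⟩

lemma edges_get_eq {G : SimpleGraph V} {u v : V} (p : G.Walk u v) :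
    ∀ (i : ℕ) (h : i < p.edges.length),
      p.edges.get ⟨i, h⟩ = s(p.getVert i, p.getVert (i+1)) := by
  induction p with
  | nil => intro i h; simp at h
  | cons hadj q ih =>
    intro i h
    cases i with
    | zero => simp [Walk.getVert_cons_succ]
    | succ n =>
      simp only [Walk.edges_cons, List.get_cons_succ, Walk.getVert_cons_succ]
      exact ih n (by simpa [Walk.edges_cons] using h)

lemma support_get_eq {G : SimpleGraph V} {u v : V} (p : G.Walk u v) :
    ∀ (i : ℕ) (h : i < p.support.length),
      p.support.get ⟨i, h⟩ = p.getVert i := by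
  induction p with
  | nil =>
    intro i h
    simp only [Walk.support_nil, List.length_singleton] at h
    interval_cases i
    simp
  | cons hadj q ih =>
    intro i h
    cases i with
    | zero => simp
    | succ n =>
      simp only [Walk.support_cons, List.get_cons_succ, Walk.getVert_cons_succ]
      exact ih n (by simpa using h)

lemma getVert_inj' {G : SimpleGraph V} {u v : V} {p : G.Walk u v} (hp : p.IsPath)
    {i j : ℕ} (hi : i ≤ p.length) (hj : j ≤ p.length)
    (hij : p.getVert i = p.getVert j) : i = j := by
  have hi' : i < p.support.length := by rw [Walk.length_support]; omega
  have hj' : j < p.support.length := by rw [Walk.length_support]; omega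
  have hnd := hp.support_nodup
  have h2 : p.support.get ⟨i, hi'⟩ = p.support.get ⟨j, hj'⟩ := by
    rw [support_get_eq, support_get_eq]; exact hij
  exact Fin.mk.inj_iff.mp ((List.Nodup.get_inj_iff hnd).mp h2)

lemma card_flip [Fintype V] (S : Set V) (r b : V) (hr : r ∈ S) (hb : b ∉ S) :
    ((S \ {r,b}) ∪ ({r,b} \ S)).ncard = S.ncard := by
  have h1 : S \ {r,b} = S \ {r} := by
    ext y; simp only [Set.mem_diff, Set.mem_insert_iff, Set.mem_singleton_iff]
    constructor
    · rintro ⟨hy, h2⟩; exact ⟨hy, fun h => h2 (Or.inl h)⟩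
    · rintro ⟨hy, h2⟩
      refine ⟨hy, ?_⟩
      rintro (h|h)
      · exact h2 h
      · exact hb (h ▸ hy)
  have h2 : ({r,b} : Set V) \ S = {b} := by
    ext y; simp only [Set.mem_diff, Set.mem_insert_iff, Set.mem_singleton_iff]
    constructor
    · rintro ⟨(h|h), h2⟩
      · exact absurd (h ▸ hr) h2
      · exact h
    · rintro rfl; exact ⟨Or.inr rfl, hb⟩
  rw [h1, h2, Set.union_singleton,
    Set.ncard_insert_of_notMem (by simp [hb]) (Set.toFinite _),
    Set.ncard_diff_singleton_add_one hr (Set.toFinite _)]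

lemma card_aug [Fintype V] (S : Set V) (b : V) (hb : b ∉ S) :
    ((S \ {b}) ∪ ({b} \ S)).ncard = S.ncard + 1 := by
  rw [Set.diff_singleton_eq_self hb,
    show ({b} : Set V) \ S = {b} by
      ext y
      simp only [Set.mem_diff, Set.mem_singleton_iff]
      exact ⟨fun h => h.1, fun h => ⟨h, h ▸ hb⟩⟩,
    Set.union_singleton, Set.ncard_insert_of_notMem hb (Set.toFinite _)]

/-- Let `M` be a 2-limited spanning subgraph of a finite simple graph `G` and
let `P` be an `M`-augmenting path.  Then `M ⊕ P` is again a 2-limited spanning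
subgraph of `G`, and the number of its vertices of degree 1 equals the number
of vertices of degree 1 in `M` minus 2. -/
theorem symmDiff_augmenting_path {G : SimpleGraph V} [Fintype V]
    (M : G.Subgraph) (hM : IsTwoLimited M) {u v : V} (p : G.Walk u v)
    (hp : IsAugmentingPath M p) :
    IsTwoLimited (symmDiffSubgraph M p) ∧
      {x : V | ((symmDiffSubgraph M p).neighborSet x).ncard = 1}.ncard + 2 =
        {x : V | (M.neighborSet x).ncard = 1}.ncard := by
  obtain ⟨hpath, hodd, hu1, hv1, halt⟩ := hp
  have hk1 : p.length % 2 = 1 := Nat.odd_iff.mp hodd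
  have hkpos : 0 < p.length := by omega
  have hlen : p.edges.length = p.length := p.length_edges
  -- edge `i` of the path is in `M` iff `i` is odd
  have hedge : ∀ i, (h : i < p.length) →
      (M.Adj (p.getVert i) (p.getVert (i+1)) ↔ i % 2 = 1) := by
    intro i h
    have h' : i < p.edges.length := by omega
    have := halt i h'
    rwa [edges_get_eq p i h', Subgraph.mem_edgeSet] at this
  have hmem_edges : ∀ i, i < p.length → s(p.getVert i, p.getVert (i+1)) ∈ p.edges := by
    intro i h
    have h' : i < p.edges.length := by omega
    rw [← edges_get_eq p i h']
    exact List.get_mem _ _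
  -- characterization of path edges incident to a vertex
  have hDchar : ∀ x y : V, s(x,y) ∈ p.edges ↔
      ∃ i, s(p.getVert i, p.getVert (i+1)) = s(x,y) ∧ i < p.length := by
    intro x y
    rw [← Walk.mem_edges_toSubgraph, Subgraph.mem_edgeSet, Walk.toSubgraph_adj_iff]
  -- the new neighbor set is the symmetric difference
  have hnbr : ∀ x, (symmDiffSubgraph M p).neighborSet x =
      (M.neighborSet x \ {y | s(x,y) ∈ p.edges}) ∪
        ({y | s(x,y) ∈ p.edges} \ M.neighborSet x) := by
    intro x; ext y
    show ((M.Adj x y ∧ s(x, y) ∉ p.edges) ∨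
      (G.Adj x y ∧ s(x, y) ∈ p.edges ∧ ¬ M.Adj x y)) ↔ _
    simp only [Set.mem_union, Set.mem_diff, Set.mem_setOf_eq, Subgraph.mem_neighborSet]
    constructor
    · rintro (⟨h1,h2⟩|⟨_,h2,h3⟩)
      · exact Or.inl ⟨h1,h2⟩
      · exact Or.inr ⟨h2,h3⟩
    · rintro (⟨h1,h2⟩|⟨h1,h2⟩)
      · exact Or.inl ⟨h1,h2⟩
      · exact Or.inr ⟨p.adj_of_mem_edges h1, h1, h2⟩
  have huv : u ≠ v := by
    intro h
    have : p.getVert 0 = p.getVert p.length := by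
      rw [p.getVert_zero, p.getVert_length]; exact h
    have := getVert_inj' hpath (Nat.zero_le _) le_rfl this
    omega
  -- main per-vertex degree computation
  have main : ∀ x : V,
      ((x = u ∨ x = v) → ((symmDiffSubgraph M p).neighborSet x).ncard = 2) ∧
      (¬(x = u ∨ x = v) →
        ((symmDiffSubgraph M p).neighborSet x).ncard = (M.neighborSet x).ncard) := by
    intro x
    by_cases hxs : x ∈ p.support
    · obtain ⟨n, hn_eq, hn_le⟩ := Walk.mem_support_iff_exists_getVert.mp hxs
      subst hn_eq
      by_cases hn0 : n = 0
      · -- the start of the path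
        subst hn0
        rw [p.getVert_zero]
        have hD : {y | s(u,y) ∈ p.edges} = {p.getVert 1} := by
          ext y
          simp only [Set.mem_setOf_eq, Set.mem_singleton_iff, hDchar]
          constructor
          · rintro ⟨i, hi, hik⟩
            rw [Sym2.eq_iff] at hi
            rcases hi with ⟨h1, h2⟩ | ⟨h1, h2⟩
            · have hi0 : i = 0 := getVert_inj' hpath (by omega) (Nat.zero_le _)
                (by rw [h1, p.getVert_zero])
              subst hi0
              exact h2.symm
            · have : i + 1 = 0 := getVert_inj' hpath (by omega) (Nat.zero_le _)
                (by rw [h2, p.getVert_zero])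
              omega
          · rintro rfl
            exact ⟨0, by rw [p.getVert_zero], hkpos⟩
        have hblue : p.getVert 1 ∉ M.neighborSet u := by
          intro h
          have := (hedge 0 hkpos).mp (by rwa [p.getVert_zero])
          omega
        constructor
        · intro _
          rw [hnbr, hD, card_aug _ _ hblue, hu1]
        · intro h
          exact absurd (Or.inl rfl) h
      · by_cases hnk : n = p.length
        · -- the end of the path
          subst hnk
          rw [p.getVert_length]
          have hD : {y | s(v,y) ∈ p.edges} = {p.getVert (p.length - 1)} := by
            ext y
            simp only [Set.mem_setOf_eq, Set.mem_singleton_iff, hDchar]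
            constructor
            · rintro ⟨i, hi, hik⟩
              rw [Sym2.eq_iff] at hi
              rcases hi with ⟨h1, h2⟩ | ⟨h1, h2⟩
              · have : i = p.length := getVert_inj' hpath (by omega) le_rfl
                  (by rw [h1, p.getVert_length])
                omega
              · have hik' : i + 1 = p.length := getVert_inj' hpath (by omega) le_rfl
                  (by rw [h2, p.getVert_length])
                rw [← h1]
                congr 1
                omega
            · rintro rfl
              refine ⟨p.length - 1, ?_, by omega⟩
              rw [show p.length - 1 + 1 = p.length by omega, p.getVert_length]
              exact Sym2.eq_swap
          have hblue : p.getVert (p.length - 1) ∉ M.neighborSet v := by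
            intro h
            have h2 : M.Adj (p.getVert (p.length - 1)) (p.getVert (p.length - 1 + 1)) := by
              rw [show p.length - 1 + 1 = p.length by omega, p.getVert_length]
              exact h.symm
            have := (hedge (p.length - 1) (by omega)).mp h2
            omega
          constructor
          · intro _
            rw [hnbr, hD, card_aug _ _ hblue, hv1]
          · intro h
            exact absurd (Or.inr rfl) h
        · -- an interior vertex of the path: 0 < n < p.length
          have hn_lt : n < p.length := lt_of_le_of_ne hn_le hnk
          have hD : {y | s(p.getVert n, y) ∈ p.edges} =
              {p.getVert (n-1), p.getVert (n+1)} := by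
            ext y
            simp only [Set.mem_setOf_eq, Set.mem_insert_iff, Set.mem_singleton_iff, hDchar]
            constructor
            · rintro ⟨i, hi, hik⟩
              rw [Sym2.eq_iff] at hi
              rcases hi with ⟨h1, h2⟩ | ⟨h1, h2⟩
              · have hin : i = n := getVert_inj' hpath (by omega) hn_le h1
                subst hin
                exact Or.inr h2.symm
              · have hin : i + 1 = n := getVert_inj' hpath (by omega) hn_le h2
                refine Or.inl ?_
                rw [← h1]
                congr 1
                omega
            · rintro (rfl | rfl)
              · refine ⟨n - 1, ?_, by omega⟩
                rw [show n - 1 + 1 = n by omega]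
                exact Sym2.eq_swap
              · exact ⟨n, rfl, hn_lt⟩
          have hne_u : p.getVert n ≠ u := by
            intro h
            have : n = 0 := getVert_inj' hpath hn_le (Nat.zero_le _)
              (by rw [h, p.getVert_zero])
            omega
          have hne_v : p.getVert n ≠ v := by
            intro h
            have : n = p.length := getVert_inj' hpath hn_le le_rfl
              (by rw [h, p.getVert_length])
            omega
          constructor
          · rintro (h | h)
            · exact absurd h hne_u
            · exact absurd h hne_v
          · intro _
            by_cases hpar : n % 2 = 1
            · -- edge n is red, edge n-1 is blue
              have hr : p.getVert (n+1) ∈ M.neighborSet (p.getVert n) :=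
                (hedge n hn_lt).mpr hpar
              have hb : p.getVert (n-1) ∉ M.neighborSet (p.getVert n) := by
                intro h
                have h2 : M.Adj (p.getVert (n-1)) (p.getVert (n-1+1)) := by
                  rw [show n - 1 + 1 = n by omega]
                  exact h.symm
                have := (hedge (n-1) (by omega)).mp h2
                omega
              rw [hnbr, hD, Set.pair_comm, card_flip _ _ _ hr hb]
            · -- edge n-1 is red, edge n is blue
              have hr : p.getVert (n-1) ∈ M.neighborSet (p.getVert n) := by
                have h2 : M.Adj (p.getVert (n-1)) (p.getVert (n-1+1)) :=
                  (hedge (n-1) (by omega)).mpr (by omega)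
                rw [show n - 1 + 1 = n by omega] at h2
                exact h2.symm
              have hb : p.getVert (n+1) ∉ M.neighborSet (p.getVert n) := by
                intro h
                have := (hedge n hn_lt).mp h
                omega
              rw [hnbr, hD, card_flip _ _ _ hr hb]
    · -- x not on the path: neighborhood unchanged
      have hD : {y | s(x,y) ∈ p.edges} = ∅ := by
        ext y
        simp only [Set.mem_setOf_eq, Set.mem_empty_iff_false, iff_false]
        intro h
        exact hxs (p.fst_mem_support_of_mem_edges h)
      constructor
      · rintro (rfl|rfl)
        · exact absurd p.start_mem_support hxs
        · exact absurd p.end_mem_support hxs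
      · intro _
        rw [hnbr, hD]
        simp
  refine ⟨⟨fun x => Set.mem_univ x, fun x => ?_⟩, ?_⟩
  · by_cases h : x = u ∨ x = v
    · rw [(main x).1 h]
      omega
    · rw [(main x).2 h]
      exact hM.2 x
  · have hset : {x : V | ((symmDiffSubgraph M p).neighborSet x).ncard = 1} =
        {x : V | (M.neighborSet x).ncard = 1} \ {u, v} := by
      ext x
      simp only [Set.mem_setOf_eq, Set.mem_diff, Set.mem_insert_iff, Set.mem_singleton_iff]
      constructor
      · intro h
        by_cases hx : x = u ∨ x = v
        · rw [(main x).1 hx] at h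
          omega
        · exact ⟨by rw [← (main x).2 hx]; exact h, fun hc => hx hc⟩
      · rintro ⟨h1, h2⟩
        rw [(main x).2 h2]
        exact h1
    rw [hset]
    set S := {x : V | (M.neighborSet x).ncard = 1} with hS
    have hu_mem : u ∈ S := hu1
    have hv_mem : v ∈ S \ {u} := ⟨hv1, fun h => huv h.symm⟩
    have e1 : S \ {u, v} = (S \ {u}) \ {v} := by
      rw [Set.diff_diff, Set.singleton_union]
    have e2 := Set.ncard_diff_singleton_add_one hv_mem (Set.toFinite _)
    have e3 := Set.ncard_diff_singleton_add_one hu_mem (Set.toFinite _)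
    rw [e1]
    omega
end

section
/- Let G be a finite simple graph and let M be a 2-limited spanning subgraph of G with exactly 2r vertices of degree 1 in M (all other vertices having degree 2 in M). If there exist r pairwise vertex-disjoint M-augmenting paths in G, then G has a 2-factor. -/
open SimpleGraph

variable {V : Type*}

lemma walk_edges_get {G : SimpleGraph V} {u v : V} (p : G.Walk u v) (i : ℕ)
    (h : i < p.edges.length) :
    p.edges.get ⟨i, h⟩ = s(p.getVert i, p.getVert (i+1)) := by
  induction p generalizing i with
  | nil => simp at h
  | cons hadj q ih =>
    cases i with
    | zero => simp [Walk.getVert]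
    | succ n =>
      simp only [Walk.edges_cons, List.length_cons] at h ⊢
      simpa [Walk.getVert_cons_succ] using ih n (by omega)

lemma path_getVert_injOn {G : SimpleGraph V} {u v : V} {p : G.Walk u v} (hp : p.IsPath) :
    ∀ m, m ≤ p.length → ∀ n, n ≤ p.length → p.getVert m = p.getVert n → m = n := by
  induction p with
  | nil => intro m hm n hn _; simp only [Walk.length_nil, Nat.le_zero] at hm hn; omega
  | cons hadj q ih =>
    rw [Walk.cons_isPath_iff] at hp
    intro m hm n hn hmn
    match m, n with
    | 0, 0 => rfl
    | 0, n+1 =>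
      exfalso; apply hp.2
      rw [Walk.mem_support_iff_exists_getVert]
      exact ⟨n, by simpa [Walk.getVert_cons_succ] using hmn.symm, by simpa using hn⟩
    | m+1, 0 =>
      exfalso; apply hp.2
      rw [Walk.mem_support_iff_exists_getVert]
      exact ⟨m, by simpa [Walk.getVert_cons_succ] using hmn, by simpa using hm⟩
    | m+1, n+1 =>
      have := ih hp.1 m (by simpa using hm) n (by simpa using hn)
        (by simpa [Walk.getVert_cons_succ] using hmn)
      omega

lemma symmDiff_single_ncard (Nm : Set V) (b : V) (hb : b ∉ Nm) (h1 : Nm.ncard = 1) :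
    ((Nm \ {b}) ∪ ({b} \ Nm)).ncard = 2 := by
  obtain ⟨a, rfl⟩ := Set.ncard_eq_one.mp h1
  have hab : a ≠ b := by rintro rfl; exact hb rfl
  have : (({a} : Set V) \ {b}) ∪ ({b} \ {a}) = {a, b} := by
    ext x; simp only [Set.mem_union, Set.mem_diff, Set.mem_singleton_iff, Set.mem_insert_iff]
    constructor
    · rintro (⟨rfl, -⟩ | ⟨rfl, -⟩) <;> tauto
    · rintro (rfl | rfl)
      · exact Or.inl ⟨rfl, hab⟩
      · exact Or.inr ⟨rfl, hab.symm⟩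
  rw [this]
  exact Set.ncard_pair hab

lemma symmDiff_pair_ncard (Nm : Set V) (a b : V) (hab : a ≠ b) (ha : a ∈ Nm) (hb : b ∉ Nm)
    (h2 : Nm.ncard = 2) : ((Nm \ {a, b}) ∪ (({a, b} : Set V) \ Nm)).ncard = 2 := by
  obtain ⟨x, y, hxy, hNm⟩ := Set.ncard_eq_two.mp h2
  subst hNm
  -- the vertex of {x,y} other than a
  obtain (rfl | rfl) : a = x ∨ a = y := by simpa using ha
  · have hyb : y ≠ b := by rintro rfl; exact hb (by simp)
    have : (({a, y} : Set V) \ {a, b}) ∪ (({a, b} : Set V) \ {a, y}) = {y, b} := by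
      ext z
      simp only [Set.mem_union, Set.mem_diff, Set.mem_insert_iff, Set.mem_singleton_iff,
        not_or]
      constructor
      · rintro (⟨rfl | rfl, h⟩ | ⟨rfl | rfl, h⟩) <;> tauto
      · rintro (rfl | rfl)
        · exact Or.inl ⟨Or.inr rfl, hxy.symm, hyb⟩
        · refine Or.inr ⟨Or.inr rfl, ?_, ?_⟩
          · rintro rfl; exact hb (by simp)
          · exact hyb.symm
    rw [this]; exact Set.ncard_pair hyb
  · have hxb : x ≠ b := by rintro rfl; exact hb (by simp)
    have : (({x, a} : Set V) \ {a, b}) ∪ (({a, b} : Set V) \ {x, a}) = {x, b} := by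
      ext z
      simp only [Set.mem_union, Set.mem_diff, Set.mem_insert_iff, Set.mem_singleton_iff,
        not_or]
      constructor
      · rintro (⟨rfl | rfl, h⟩ | ⟨rfl | rfl, h⟩) <;> tauto
      · rintro (rfl | rfl)
        · exact Or.inl ⟨Or.inl rfl, hxy, hxb⟩
        · refine Or.inr ⟨Or.inr rfl, ?_, ?_⟩
          · exact hxb.symm
          · rintro rfl; exact hb (by simp)
    rw [this]; exact Set.ncard_pair hxb

/-- Let `M` be a 2-limited spanning subgraph of a finite simple graph `G` with
exactly `2r` vertices of degree 1.  If there exist `r` pairwise vertex-disjoint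
`M`-augmenting paths in `G`, then `G` has a 2-factor. -/
theorem twoFactor_of_augmenting_paths {G : SimpleGraph V} [Fintype V]
    (M : G.Subgraph) (hM : IsTwoLimited M) (r : ℕ)
    (hr : {x : V | (M.neighborSet x).ncard = 1}.ncard = 2 * r)
    (hpaths : ∃ (e : Fin r → V × V) (p : ∀ i, G.Walk (e i).1 (e i).2),
      (∀ i, IsAugmentingPath M (p i)) ∧
        ∀ i j, i ≠ j → ∀ x : V, x ∈ (p i).support → x ∉ (p j).support) :
    ∃ F : G.Subgraph, F.IsSpanning ∧ ∀ v : V, (F.neighborSet v).ncard = 2 := by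
  classical
  obtain ⟨e, p, haug, hdisj⟩ := hpaths
  have hlen : ∀ i, 0 < (p i).length := fun i => (haug i).2.1.pos
  -- endpoints lie in supports
  have hfst : ∀ i, (e i).1 ∈ (p i).support := fun i => (p i).start_mem_support
  have hsnd : ∀ i, (e i).2 ∈ (p i).support := fun i => (p i).end_mem_support
  have hne : ∀ i, (e i).1 ≠ (e i).2 := by
    intro i h
    have := path_getVert_injOn (haug i).1 0 (Nat.zero_le _) (p i).length le_rfl
      (by rw [Walk.getVert_zero, Walk.getVert_length]; exact h)
    exact (hlen i).ne' this.symm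
  -- every unfilled vertex is an endpoint of some path
  have hends : {x : V | ∃ i, x = (e i).1 ∨ x = (e i).2}
      = {x : V | (M.neighborSet x).ncard = 1} := by
    apply Set.eq_of_subset_of_ncard_le
    · rintro x ⟨i, (rfl | rfl)⟩
      · exact (haug i).2.2.1
      · exact (haug i).2.2.2.1
    · rw [hr]
      have hcoe : {x : V | ∃ i, x = (e i).1 ∨ x = (e i).2}
          = ↑(Finset.univ.biUnion fun i : Fin r => ({(e i).1, (e i).2} : Finset V)) := by
        ext x; simp [eq_comm]
      rw [hcoe, Set.ncard_coe_finset]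
      rw [Finset.card_biUnion]
      · simp only [Finset.card_pair (hne _)]
        simp [Finset.sum_const, mul_comm]
      · intro i _ j _ hij
        simp only [Finset.disjoint_left, Finset.mem_insert, Finset.mem_singleton]
        intro x hx1 hx2
        have hxi : x ∈ (p i).support := by
          rcases hx1 with h | h <;> subst h
          · exact hfst i
          · exact hsnd i
        have hxj : x ∈ (p j).support := by
          rcases hx2 with h | h <;> subst h
          · exact hfst j
          · exact hsnd j
        exact hdisj i j hij x hxi hxj
    · exact Set.toFinite _
  have hdeg2 : ∀ v : V, (¬ ∃ i, v = (e i).1 ∨ v = (e i).2) →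
      (M.neighborSet v).ncard = 2 := by
    intro v hv
    have h1 := (hM.2 v).1
    have h2 := (hM.2 v).2
    have h3 : (M.neighborSet v).ncard ≠ 1 := by
      intro h
      have hv' : v ∈ {x : V | (M.neighborSet x).ncard = 1} := h
      rw [← hends] at hv'
      exact hv hv'
    omega
  -- the path-neighbor relation
  set NP : V → Set V := fun v => {w | ∃ i, s(v, w) ∈ (p i).edges} with hNPdef
  have hswap : ∀ a b : V, b ∈ NP a ↔ a ∈ NP b := by
    intro a b
    exact exists_congr fun i => by rw [Sym2.eq_swap]
  refine ⟨⟨Set.univ,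
    fun x y => (M.Adj x y ∧ y ∉ NP x) ∨ (¬ M.Adj x y ∧ y ∈ NP x), ?_, ?_, ?_⟩, ?_, ?_⟩
  · rintro x y (⟨h, -⟩ | ⟨-, i, h⟩)
    · exact M.adj_sub h
    · exact (p i).adj_of_mem_edges h
  · intro x y _; trivial
  · constructor; intro x y hxy
    rcases hxy with ⟨h, hy⟩ | ⟨h, hy⟩
    · exact Or.inl ⟨h.symm, fun hx => hy ((hswap y x).mp hx)⟩
    · exact Or.inr ⟨fun h' => h h'.symm, (hswap x y).mp hy⟩
  · intro v; trivial
  · intro v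
    show ({w : V | (M.Adj v w ∧ w ∉ NP v) ∨ (¬ M.Adj v w ∧ w ∈ NP v)}).ncard = 2
    have hset : {w : V | (M.Adj v w ∧ w ∉ NP v) ∨ (¬ M.Adj v w ∧ w ∈ NP v)}
        = (M.neighborSet v \ NP v) ∪ (NP v \ M.neighborSet v) := by
      ext w
      simp only [Set.mem_setOf_eq, Set.mem_union, Set.mem_diff, Subgraph.mem_neighborSet]
      tauto
    rw [hset]
    by_cases hv : ∃ i, v ∈ (p i).support
    · obtain ⟨i, hvi⟩ := hv
      obtain ⟨k, hk, hkle⟩ := Walk.mem_support_iff_exists_getVert.mp hvi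
      have inj := path_getVert_injOn (haug i).1
      have hNPi : NP v = {w | s(v, w) ∈ (p i).edges} := by
        ext w
        constructor
        · rintro ⟨j, hj⟩
          by_cases hji : j = i
          · subst hji; exact hj
          · exact absurd ((p j).fst_mem_support_of_mem_edges hj)
              (hdisj i j (fun h => hji h.symm) v hvi)
        · intro hw; exact ⟨i, hw⟩
      have hMedge : ∀ m, m < (p i).length →
          (M.Adj ((p i).getVert m) ((p i).getVert (m+1)) ↔ m % 2 = 1) := by
        intro m hm
        have hm' : m < (p i).edges.length := by rw [Walk.length_edges]; exact hm
        have h := (haug i).2.2.2.2 m hm'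
        rw [walk_edges_get, Subgraph.mem_edgeSet] at h
        exact h
      have hmemchar : ∀ w, s(v, w) ∈ (p i).edges ↔
          ((k < (p i).length ∧ w = (p i).getVert (k+1)) ∨
           (0 < k ∧ w = (p i).getVert (k-1))) := by
        intro w
        constructor
        · intro hw
          obtain ⟨⟨m, hm⟩, hget⟩ := List.mem_iff_get.mp hw
          rw [walk_edges_get] at hget
          have hmL : m < (p i).length := by rw [← Walk.length_edges]; exact hm
          rcases Sym2.eq_iff.mp hget with ⟨h1, h2⟩ | ⟨h1, h2⟩
          · have hmk : m = k := inj m hmL.le k hkle (h1.trans hk.symm)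
            subst hmk
            exact Or.inl ⟨hmL, h2.symm⟩
          · have hmk : m + 1 = k := inj (m+1) hmL k hkle (h2.trans hk.symm)
            refine Or.inr ⟨by omega, ?_⟩
            rw [← h1]; congr 1; omega
        · rintro (⟨hkL, rfl⟩ | ⟨hk0, rfl⟩)
          · have hmm : k < (p i).edges.length := by rw [Walk.length_edges]; exact hkL
            have hg := walk_edges_get (p i) k hmm
            rw [← hk, ← hg]
            exact List.get_mem _ _
          · have hmm : k - 1 < (p i).edges.length := by rw [Walk.length_edges]; omega
            have hsc : k - 1 + 1 = k := Nat.succ_pred_eq_of_pos hk0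
            have hg : (p i).edges.get ⟨k-1, hmm⟩ = s((p i).getVert (k-1), v) := by
              rw [walk_edges_get, hsc, hk]
            rw [Sym2.eq_swap, ← hg]
            exact List.get_mem _ _
      by_cases hk0 : k = 0
      · -- v is the first endpoint
        subst hk0
        have hv1 : (e i).1 = v := by rw [← hk, Walk.getVert_zero]
        have dM : (M.neighborSet v).ncard = 1 := hv1 ▸ (haug i).2.2.1
        have hNPv : NP v = {(p i).getVert 1} := by
          rw [hNPi]; ext w
          rw [Set.mem_setOf_eq, hmemchar w]
          constructor
          · rintro (⟨-, rfl⟩ | ⟨h0, -⟩)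
            · rfl
            · omega
          · rintro rfl
            exact Or.inl ⟨hlen i, rfl⟩
        have hb : (p i).getVert 1 ∉ M.neighborSet v := by
          intro hmem
          have h01 : M.Adj ((p i).getVert 0) ((p i).getVert 1) := by
            rw [hk]; exact hmem
          have := (hMedge 0 (hlen i)).mp h01
          omega
        rw [hNPv]
        exact symmDiff_single_ncard _ _ hb dM
      · by_cases hkL : k = (p i).length
        · -- v is the second endpoint
          subst hkL
          have hv2 : (e i).2 = v := by rw [← hk, Walk.getVert_length]
          have dM : (M.neighborSet v).ncard = 1 := hv2 ▸ (haug i).2.2.2.1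
          have hNPv : NP v = {(p i).getVert ((p i).length - 1)} := by
            rw [hNPi]; ext w
            rw [Set.mem_setOf_eq, hmemchar w]
            constructor
            · rintro (⟨h0, -⟩ | ⟨-, rfl⟩)
              · omega
              · rfl
            · rintro rfl
              exact Or.inr ⟨by omega, rfl⟩
          have hb : (p i).getVert ((p i).length - 1) ∉ M.neighborSet v := by
            intro hmem
            have hsc : (p i).length - 1 + 1 = (p i).length :=
              Nat.succ_pred_eq_of_pos (hlen i)
            have h01 : M.Adj ((p i).getVert ((p i).length - 1))
                ((p i).getVert ((p i).length - 1 + 1)) := by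
              rw [hsc, hk]
              exact hmem.symm
            have := (hMedge ((p i).length - 1) (by omega)).mp h01
            obtain ⟨t, ht⟩ := (haug i).2.1
            omega
          rw [hNPv]
          exact symmDiff_single_ncard _ _ hb dM
        · -- v is internal
          have hk0' : 0 < k := Nat.pos_of_ne_zero hk0
          have hkL' : k < (p i).length := lt_of_le_of_ne hkle hkL
          have hsc : k - 1 + 1 = k := Nat.succ_pred_eq_of_pos hk0'
          have hNPv : NP v = {(p i).getVert (k-1), (p i).getVert (k+1)} := by
            rw [hNPi]; ext w
            rw [Set.mem_setOf_eq, hmemchar w]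
            constructor
            · rintro (⟨-, rfl⟩ | ⟨-, rfl⟩)
              · exact Or.inr rfl
              · exact Or.inl rfl
            · rintro (rfl | rfl)
              · exact Or.inr ⟨hk0', rfl⟩
              · exact Or.inl ⟨hkL', rfl⟩
          have hne2 : (p i).getVert (k-1) ≠ (p i).getVert (k+1) := by
            intro h
            have := inj (k-1) (by omega) (k+1) (by omega) h
            omega
          have hMa : M.Adj v ((p i).getVert (k-1)) ↔ (k-1) % 2 = 1 := by
            rw [← hMedge (k-1) (by omega)]
            constructor
            · intro h; rw [hsc, hk]; exact h.symm
            · intro h; rw [hsc, hk] at h; exact h.symm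
          have hMb : M.Adj v ((p i).getVert (k+1)) ↔ k % 2 = 1 := by
            rw [← hMedge k hkL', hk]
          have dM : (M.neighborSet v).ncard = 2 := by
            apply hdeg2
            rintro ⟨j, hj⟩
            by_cases hji : j = i
            · subst hji
              rcases hj with h | h
              · have : (0 : ℕ) = k := inj 0 (by omega) k hkle
                  (((p j).getVert_zero).trans (h.symm.trans hk.symm))
                omega
              · have : (p j).length = k := inj (p j).length le_rfl k hkle
                  (((p j).getVert_length).trans (h.symm.trans hk.symm))
                omega
            · have hjs : v ∈ (p j).support := by
                rcases hj with h | h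
                · rw [h]; exact hfst j
                · rw [h]; exact hsnd j
              exact hdisj i j (fun h => hji h.symm) v hvi hjs
          rcases Nat.even_or_odd k with ⟨t, ht⟩ | ⟨t, ht⟩
          · have ha : (p i).getVert (k-1) ∈ M.neighborSet v := by
              rw [Subgraph.mem_neighborSet, hMa]
              omega
            have hb : (p i).getVert (k+1) ∉ M.neighborSet v := by
              rw [Subgraph.mem_neighborSet, hMb]
              omega
            rw [hNPv]
            exact symmDiff_pair_ncard _ _ _ hne2 ha hb dM
          · have ha : (p i).getVert (k+1) ∈ M.neighborSet v := by
              rw [Subgraph.mem_neighborSet, hMb]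
              omega
            have hb : (p i).getVert (k-1) ∉ M.neighborSet v := by
              rw [Subgraph.mem_neighborSet, hMa]
              omega
            rw [hNPv, Set.pair_comm]
            exact symmDiff_pair_ncard _ _ _ (Ne.symm hne2) ha hb dM
    · have hNPv : NP v = ∅ := by
        ext w
        simp only [hNPdef, Set.mem_setOf_eq, Set.mem_empty_iff_false, iff_false]
        rintro ⟨i, hw⟩
        exact hv ⟨i, (p i).fst_mem_support_of_mem_edges hw⟩
      rw [hNPv]
      simp only [Set.diff_empty, Set.empty_diff, Set.union_empty]
      apply hdeg2
      rintro ⟨i, (rfl | rfl)⟩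
      · exact hv ⟨i, hfst i⟩
      · exact hv ⟨i, hsnd i⟩
end
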